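/- There do not exist a unitary operator V on ℂ⁴, orthonormal bases {a₁, a₂}, {b₁, b₂}, {b'₁, b'₂} of ℂ², orthonormal bases {y_{ij}}_{i,j ∈ {1,2}} and {y'_{ij}}_{i,j ∈ {1,2}} of ℂ⁴ and a unit vector p ∈ ℂ⁴ satisfying V y_{ij} = aᵢ ⊗ bⱼ and V y'_{ij} = aᵢ ⊗ b'ⱼ for all i, j, together with the experimentally measured coincidence probabilities of the measurements A'B and A'B' on 'The Animal Acts', namely |⟨y_{11}, p⟩|² = 63/81, |⟨y_{12}, p⟩|² = 7/81, |⟨y_{21}, p⟩|² = 7/81, |⟨y_{22}, p⟩|² = 4/81 and |⟨y'_{11}, p⟩|² = 12/81, |⟨y'_{12}, p⟩|² = 7/81, |⟨y'_{21}, p⟩|² = 8/81, |⟨y'_{22}, p⟩|² = 54/81. In other words, since these data violate the marginal law (63/81 + 7/81 = 70/81 ≠ 19/81 = 12/81 + 7/81), the two coincidence measurements A'B and A'B' cannot both be product measurements with respect to one and the same isomorphism of ℂ⁴ with ℂ²⊗ℂ²; at least one of them must be an entangled measurement. -/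

import Mathlib

open scoped InnerProductSpace

noncomputable section

/-- Tensor product `u ⊗ v` of two vectors of ℂ², as a vector of ℂ⁴ (the model of ℂ²⊗ℂ²):
`(u ⊗ v)(i,j) = u i * v j`. -/
def tp (u v : EuclideanSpace ℂ (Fin 2)) : EuclideanSpace ℂ (Fin 2 × Fin 2) :=
  WithLp.toLp 2 (fun p : Fin 2 × Fin 2 => u p.1 * v p.2)

lemma inner_tp (u v u' v' : EuclideanSpace ℂ (Fin 2)) :
    ⟪tp u v, tp u' v'⟫_ℂ = ⟪u, u'⟫_ℂ * ⟪v, v'⟫_ℂ := by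
  simp only [tp, PiLp.inner_apply, PiLp.toLp_apply, RCLike.inner_apply, map_mul]
  rw [Fintype.sum_prod_type, Finset.sum_mul_sum]
  exact Finset.sum_congr rfl fun i _ => Finset.sum_congr rfl fun j _ => by ring

lemma conj_mul_self_eq (z : ℂ) : (starRingEnd ℂ) z * z = ((‖z‖ ^ 2 : ℝ) : ℂ) := by
  rw [← Complex.normSq_eq_conj_mul_self, Complex.normSq_eq_norm_sq]

/-- there is no single isomorphism `V` of ℂ⁴ with ℂ²⊗ℂ² with respect to which
both coincidence measurements `A'B` (eigenbasis `{y_{ij}}`, `V y_{ij} = aᵢ ⊗ bⱼ`) and `A'B'`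
(eigenbasis `{y'_{ij}}`, `V y'_{ij} = aᵢ ⊗ b'ⱼ`) are product measurements while reproducing
the experimentally measured probabilities of 'The Animal Acts':
`63/81, 7/81, 7/81, 4/81` for `A'B` and `12/81, 7/81, 8/81, 54/81` for `A'B'`.
These data violate the marginal law (`70/81 ≠ 19/81`), so at least one of the two
measurements must be entangled. -/
theorem no_common_isomorphism_for_A'B_and_A'B'_data :
    ¬ ∃ (V : EuclideanSpace ℂ (Fin 2 × Fin 2) ≃ₗᵢ[ℂ] EuclideanSpace ℂ (Fin 2 × Fin 2))
        (a b b' : Fin 2 → EuclideanSpace ℂ (Fin 2))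
        (y y' : Fin 2 → Fin 2 → EuclideanSpace ℂ (Fin 2 × Fin 2))
        (p : EuclideanSpace ℂ (Fin 2 × Fin 2)),
      Orthonormal ℂ a ∧ Orthonormal ℂ b ∧ Orthonormal ℂ b' ∧
      Orthonormal ℂ (fun q : Fin 2 × Fin 2 => y q.1 q.2) ∧
      Orthonormal ℂ (fun q : Fin 2 × Fin 2 => y' q.1 q.2) ∧ ‖p‖ = 1 ∧
      (∀ i j : Fin 2, V (y i j) = tp (a i) (b j)) ∧
      (∀ i j : Fin 2, V (y' i j) = tp (a i) (b' j)) ∧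
      ‖⟪y 0 0, p⟫_ℂ‖ ^ 2 = 63 / 81 ∧
      ‖⟪y 0 1, p⟫_ℂ‖ ^ 2 = 7 / 81 ∧
      ‖⟪y 1 0, p⟫_ℂ‖ ^ 2 = 7 / 81 ∧
      ‖⟪y 1 1, p⟫_ℂ‖ ^ 2 = 4 / 81 ∧
      ‖⟪y' 0 0, p⟫_ℂ‖ ^ 2 = 12 / 81 ∧
      ‖⟪y' 0 1, p⟫_ℂ‖ ^ 2 = 7 / 81 ∧
      ‖⟪y' 1 0, p⟫_ℂ‖ ^ 2 = 8 / 81 ∧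
      ‖⟪y' 1 1, p⟫_ℂ‖ ^ 2 = 54 / 81 := by
  rintro ⟨V, a, b, b', y, y', p, ha, hb, hb', hy, hy', hp, hVy, hVy',
    e1, e2, e3, e4, f1, f2, f3, f4⟩
  -- orthonormal basis of ℂ⁴ from y
  have hcard4 : Fintype.card (Fin 2 × Fin 2) =
      Module.finrank ℂ (EuclideanSpace ℂ (Fin 2 × Fin 2)) := by
    simp [finrank_euclideanSpace]
  have hcard2 : Fintype.card (Fin 2) =
      Module.finrank ℂ (EuclideanSpace ℂ (Fin 2)) := by
    simp [finrank_euclideanSpace]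
  set Ybas := basisOfOrthonormalOfCardEqFinrank hy hcard4 with hYdef
  have hYcoe : ⇑Ybas = fun q : Fin 2 × Fin 2 => y q.1 q.2 :=
    coe_basisOfOrthonormalOfCardEqFinrank hy hcard4
  have hyY : Orthonormal ℂ ⇑Ybas := by rw [hYcoe]; exact hy
  set Y := Ybas.toOrthonormalBasis hyY with hY
  have hYc : ⇑Y = fun q : Fin 2 × Fin 2 => y q.1 q.2 := by
    rw [hY, Module.Basis.coe_toOrthonormalBasis, hYcoe]
  set B'bas := basisOfOrthonormalOfCardEqFinrank hb' hcard2 with hB'def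
  have hB'coe : ⇑B'bas = b' := coe_basisOfOrthonormalOfCardEqFinrank hb' hcard2
  have hbB : Orthonormal ℂ ⇑B'bas := by rw [hB'coe]; exact hb'
  set B' := B'bas.toOrthonormalBasis hbB with hB'
  have hB'c : ⇑B' = b' := by rw [hB', Module.Basis.coe_toOrthonormalBasis, hB'coe]
  -- inner products between the two bases
  have hinner : ∀ j i k : Fin 2,
      ⟪y' 0 j, y i k⟫_ℂ = ⟪a 0, a i⟫_ℂ * ⟪b' j, b k⟫_ℂ := by
    intro j i k
    rw [← V.inner_map_map, hVy', hVy, inner_tp]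
  have ha' := orthonormal_iff_ite.mp ha
  have hb'' := orthonormal_iff_ite.mp hb
  have ha00 : ⟪a 0, a 0⟫_ℂ = 1 := by simpa using ha' 0 0
  have ha01 : ⟪a 0, a 1⟫_ℂ = 0 := by simpa using ha' 0 1
  -- key expansion of ⟪y' 0 j, p⟫
  have hgamma : ∀ j : Fin 2,
      ⟪y' 0 j, p⟫_ℂ = ⟪b' j, b 0⟫_ℂ * ⟪y 0 0, p⟫_ℂ + ⟪b' j, b 1⟫_ℂ * ⟪y 0 1, p⟫_ℂ := by
    intro j
    have h := Y.sum_inner_mul_inner (y' 0 j) p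
    rw [← h]
    simp only [hYc]
    rw [Fintype.sum_prod_type, Fin.sum_univ_two, Fin.sum_univ_two, Fin.sum_univ_two]
    simp only [hinner, ha00, ha01]
    ring
  -- Parseval relative to b'
  have hBpar : ∀ k l : Fin 2,
      ⟪b k, b' 0⟫_ℂ * ⟪b' 0, b l⟫_ℂ + ⟪b k, b' 1⟫_ℂ * ⟪b' 1, b l⟫_ℂ = ⟪b k, b l⟫_ℂ := by
    intro k l
    have h := B'.sum_inner_mul_inner (b k) (b l)
    rw [Fin.sum_univ_two] at h
    simpa [hB'c] using h
  have hb00 : ⟪b 0, b 0⟫_ℂ = 1 := by simpa using hb'' 0 0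
  have hb11 : ⟪b 1, b 1⟫_ℂ = 1 := by simpa using hb'' 1 1
  have hb01 : ⟪b 0, b 1⟫_ℂ = 0 := by simpa using hb'' 0 1
  have hb10 : ⟪b 1, b 0⟫_ℂ = 0 := by simpa using hb'' 1 0
  set α0 := ⟪y 0 0, p⟫_ℂ
  set α1 := ⟪y 0 1, p⟫_ℂ
  set γ0 := ⟪y' 0 0, p⟫_ℂ
  set γ1 := ⟪y' 0 1, p⟫_ℂ
  set m00 := ⟪b' 0, b 0⟫_ℂ; set m01 := ⟪b' 0, b 1⟫_ℂ
  set m10 := ⟪b' 1, b 0⟫_ℂ; set m11 := ⟪b' 1, b 1⟫_ℂ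
  have hg0 : γ0 = m00 * α0 + m01 * α1 := hgamma 0
  have hg1 : γ1 = m10 * α0 + m11 * α1 := hgamma 1
  have hcm : ∀ j k : Fin 2, ⟪b k, b' j⟫_ℂ = (starRingEnd ℂ) ⟪b' j, b k⟫_ℂ := by
    intro j k; rw [inner_conj_symm]
  have hP00 : (starRingEnd ℂ) m00 * m00 + (starRingEnd ℂ) m10 * m10 = 1 := by
    have h := hBpar 0 0; rw [hcm 0 0, hcm 1 0, hb00] at h; linear_combination h
  have hP11 : (starRingEnd ℂ) m01 * m01 + (starRingEnd ℂ) m11 * m11 = 1 := by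
    have h := hBpar 1 1; rw [hcm 0 1, hcm 1 1, hb11] at h; linear_combination h
  have hP01 : (starRingEnd ℂ) m00 * m01 + (starRingEnd ℂ) m10 * m11 = 0 := by
    have h := hBpar 0 1; rw [hcm 0 0, hcm 1 0, hb01] at h; linear_combination h
  have hP10 : (starRingEnd ℂ) m01 * m00 + (starRingEnd ℂ) m11 * m10 = 0 := by
    have h := hBpar 1 0; rw [hcm 0 1, hcm 1 1, hb10] at h; linear_combination h
  -- complex Parseval identity
  have key : (starRingEnd ℂ) γ0 * γ0 + (starRingEnd ℂ) γ1 * γ1 =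
      (starRingEnd ℂ) α0 * α0 + (starRingEnd ℂ) α1 * α1 := by
    rw [hg0, hg1]
    simp only [map_add, map_mul]
    linear_combination ((starRingEnd ℂ) α0 * α0) * hP00 +
      ((starRingEnd ℂ) α1 * α1) * hP11 + ((starRingEnd ℂ) α0 * α1) * hP01 +
      ((starRingEnd ℂ) α1 * α0) * hP10
  rw [conj_mul_self_eq, conj_mul_self_eq, conj_mul_self_eq, conj_mul_self_eq] at key
  rw [f1, f2, e1, e2] at key
  norm_num at key

end
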